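/- For every odd integer m ≥ 1, the cardinality of CBFS₂(2m+2) equals (the sum over i from 0 to (m+1)/2 of C_i·C_{m−i}) minus (C_{(m−1)/2})², where C_k denotes the k-th Catalan number. -/

import Mathlib

/-- A binary word (as a list of Booleans, `true` = 1, `false` = 0) is a Dyck word
if it has as many 1s as 0s and every prefix has at least as many 1s as 0s. -/
def IsDyck (w : List Bool) : Prop :=
  w.count true = w.count false ∧
  ∀ p : List Bool, p <+: w → p.count false ≤ p.count true

/-- `DyckLen w n` : `w` is a Dyck word of length `n`. -/
def DyckLen (w : List Bool) (n : ℕ) : Prop := IsDyck w ∧ w.length = n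

open List

namespace CBFSaux

def stepOf : Bool → DyckStep := fun b => bif b then .U else .D
def boolOf : DyckStep → Bool := fun s => match s with | .U => true | .D => false

lemma stepOf_inj : Function.Injective stepOf := by
  intro a b h; cases a <;> cases b <;> simp [stepOf] at h ⊢

lemma boolOf_inj : Function.Injective boolOf := by
  intro a b h; cases a <;> cases b <;> simp [boolOf] at h ⊢

lemma boolOf_stepOf : boolOf ∘ stepOf = id := by
  funext b; cases b <;> rfl

lemma stepOf_boolOf : stepOf ∘ boolOf = id := by
  funext s; cases s <;> rfl


lemma count_U_map (w : List Bool) : (w.map stepOf).count .U = w.count true :=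
  List.count_map_of_injective w stepOf stepOf_inj true

lemma count_D_map (w : List Bool) : (w.map stepOf).count .D = w.count false :=
  List.count_map_of_injective w stepOf stepOf_inj false

lemma count_true_map (l : List DyckStep) : (l.map boolOf).count true = l.count .U :=
  List.count_map_of_injective l boolOf boolOf_inj .U

lemma count_false_map (l : List DyckStep) : (l.map boolOf).count false = l.count .D :=
  List.count_map_of_injective l boolOf boolOf_inj .D

def Dset (n : ℕ) : Set (List Bool) := {w | DyckLen w n}

lemma Dset_finite (n : ℕ) : (Dset n).Finite :=
  (List.finite_length_eq Bool n).subset (fun _ hw => hw.2)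

def toDW (w : List Bool) (h : IsDyck w) : DyckWord where
  toList := w.map stepOf
  count_U_eq_count_D := by rw [count_U_map, count_D_map, h.1]
  count_D_le_count_U i := by
    rw [← List.map_take, count_U_map, count_D_map]
    exact h.2 _ (List.take_prefix i w)

lemma isDyck_ofDW (p : DyckWord) : IsDyck (p.toList.map boolOf) := by
  constructor
  · rw [count_true_map, count_false_map]; exact p.count_U_eq_count_D
  · intro q hq
    rw [List.prefix_iff_eq_take.mp hq, ← List.map_take, count_true_map, count_false_map]
    exact p.count_D_le_count_U _

noncomputable def dyckEquiv (n : ℕ) :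
    (Dset (2 * n)) ≃ { p : DyckWord // p.semilength = n } where
  toFun w := ⟨toDW w.1 w.2.1, by
    have h2 := DyckWord.two_mul_semilength_eq_length (p := toDW w.1 w.2.1)
    have h3 : (toDW w.1 w.2.1).toList.length = w.1.length := List.length_map _
    have := w.2.2
    omega⟩
  invFun p := ⟨p.1.toList.map boolOf, isDyck_ofDW p.1, by
    have h2 := DyckWord.two_mul_semilength_eq_length (p := p.1)
    rw [List.length_map, ← h2, p.2]⟩
  left_inv w := by
    apply Subtype.ext
    simp [toDW, List.map_map, boolOf_stepOf]
  right_inv p := by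
    apply Subtype.ext
    apply DyckWord.ext
    simp [toDW, List.map_map, stepOf_boolOf]

lemma Dset_ncard (n : ℕ) : (Dset (2 * n)).ncard = catalan n := by
  rw [← Nat.card_coe_set_eq, Nat.card_congr (dyckEquiv n),
    Nat.card_eq_fintype_card, DyckWord.card_dyckWord_semilength_eq_catalan]


lemma ncard_prod {α β : Type*} (s : Set α) (t : Set β) :
    (s ×ˢ t).ncard = s.ncard * t.ncard := by
  rw [← Nat.card_coe_set_eq, ← Nat.card_coe_set_eq, ← Nat.card_coe_set_eq,
    Nat.card_congr (Equiv.Set.prod s t), Nat.card_prod]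

lemma ncard_biUnion {ι α : Type*} (s : Finset ι) (f : ι → Set α)
    (hfin : ∀ i ∈ s, (f i).Finite)
    (hdisj : ∀ i ∈ s, ∀ j ∈ s, i ≠ j → Disjoint (f i) (f j)) :
    (⋃ i ∈ (s : Set ι), f i).ncard = ∑ i ∈ s, (f i).ncard := by
  classical
  induction s using Finset.induction with
  | empty => simp
  | @insert a s ha ih =>
    rw [Finset.coe_insert, Set.biUnion_insert, Finset.sum_insert ha]
    have hdisj' : Disjoint (f a) (⋃ i ∈ (s : Set ι), f i) := by
      rw [Set.disjoint_iUnion_right]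
      intro i
      rw [Set.disjoint_iUnion_right]
      intro hi
      rw [Finset.mem_coe] at hi
      exact hdisj a (Finset.mem_insert_self a s) i (Finset.mem_insert_of_mem hi)
        (fun h => ha (h ▸ hi))
    rw [Set.ncard_union_eq hdisj' (hfin a (Finset.mem_insert_self a s))
        (Set.Finite.biUnion s.finite_toSet
          (fun i hi => hfin i (Finset.mem_insert_of_mem hi))),
      ih (fun i hi => hfin i (Finset.mem_insert_of_mem hi))
        (fun i hi j hj hij => hdisj i (Finset.mem_insert_of_mem hi)
          j (Finset.mem_insert_of_mem hj) hij)]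

/-- Core uniqueness: a word cannot decompose as `α·1·β·0` with a strictly shorter Dyck `α`. -/
lemma no_lt_decomp {a1 b1 a2 b2 : List Bool} (h1 : IsDyck a1) (h2 : IsDyck a2)
    (hb1 : IsDyck b1)
    (h : a1 ++ (true :: (b1 ++ [false])) = a2 ++ (true :: (b2 ++ [false])))
    (hlt : a1.length < a2.length) : False := by
  have p1 : a1 <+: a2 :=
    List.prefix_of_prefix_length_le ⟨true :: (b1 ++ [false]), h⟩
      (List.prefix_append a2 (true :: (b2 ++ [false]))) hlt.le
  obtain ⟨t, ht⟩ := p1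
  subst ht
  rw [List.append_assoc] at h
  have h' : true :: (b1 ++ [false]) = t ++ (true :: (b2 ++ [false])) :=
    List.append_cancel_left h
  match t, h' with
  | [], h' =>
    simp at hlt
  | b :: d, h' =>
    rw [List.cons_append] at h'
    obtain ⟨hb, hd⟩ := List.cons_eq_cons.mp h'
    -- hd : b1 ++ [false] = d ++ (true :: (b2 ++ [false]))
    subst hb
    have hdlen : d.length ≤ b1.length := by
      have := congrArg List.length hd
      simp at this
      omega
    have hdpre : d <+: b1 :=
      List.prefix_of_prefix_length_le ⟨true :: (b2 ++ [false]), hd.symm⟩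
        (List.prefix_append b1 [false]) hdlen
    have hcnt : d.count false ≤ d.count true := hb1.2 d hdpre
    have hc1 : a1.count true = a1.count false := h1.1
    have hc2 : (a1 ++ true :: d).count true = (a1 ++ true :: d).count false := h2.1
    simp [List.count_append, List.count_cons] at hc2
    omega

lemma decomp_eq {a1 b1 a2 b2 : List Bool} (h1 : IsDyck a1) (h2 : IsDyck a2)
    (hb1 : IsDyck b1) (hb2 : IsDyck b2)
    (h : a1 ++ (true :: (b1 ++ [false])) = a2 ++ (true :: (b2 ++ [false]))) :
    a1 = a2 ∧ b1 = b2 := by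
  rcases lt_trichotomy a1.length a2.length with hl | hl | hl
  · exact (no_lt_decomp h1 h2 hb1 h hl).elim
  · obtain ⟨ha, htl⟩ := List.append_inj h hl
    obtain ⟨-, htl2⟩ := List.cons_eq_cons.mp htl
    have hlen : b1.length = b2.length := by
      have := congrArg List.length htl2; simp at this; omega
    exact ⟨ha, (List.append_inj htl2 hlen).1⟩
  · exact (no_lt_decomp h2 h1 hb2 h.symm hl).elim

lemma isDyck_nest {a : List Bool} (h : IsDyck a) : IsDyck (true :: (a ++ [false])) := by
  constructor
  · simp [List.count_append, List.count_cons, h.1]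
  · intro p hp
    match p, hp with
    | [], _ => simp
    | b :: q, hp =>
      obtain ⟨hb, hq⟩ := List.cons_prefix_cons.mp hp
      subst hb
      rcases Nat.lt_or_ge q.length (a.length + 1) with hql | hql
      · have hq' : q <+: a :=
          List.prefix_of_prefix_length_le hq (List.prefix_append a [false]) (by omega)
        have := h.2 q hq'
        simp [List.count_cons]
        omega
      · have hlen : q.length = a.length + 1 := by
          have := hq.length_le; simp at this; omega
        have hq' : q = a ++ [false] := hq.eq_of_length (by simp [hlen])
        subst hq'
        have := h.1
        simp [List.count_append, List.count_cons, this]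

def F2 : List Bool × List Bool → List Bool := fun p => p.1 ++ (true :: (p.2 ++ [false]))

def Part (m i : ℕ) : Set (List Bool) := F2 '' (Dset (2 * i) ×ˢ Dset (2 * (m - i)))

lemma Part_finite (m i : ℕ) : (Part m i).Finite :=
  (((Dset_finite _).prod (Dset_finite _)).image _)

lemma Part_ncard (m i : ℕ) : (Part m i).ncard = catalan i * catalan (m - i) := by
  rw [Part, Set.ncard_image_of_injOn, ncard_prod, Dset_ncard, Dset_ncard]
  rintro ⟨a1, b1⟩ ⟨ha1, hb1⟩ ⟨a2, b2⟩ ⟨ha2, hb2⟩ hF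
  simp only [F2] at hF
  obtain ⟨h1, h2⟩ := decomp_eq ha1.1 ha2.1 hb1.1 hb2.1 hF
  simp only [Prod.mk.injEq]
  exact ⟨h1, h2⟩

lemma Part_disjoint (m : ℕ) {i j : ℕ} (hij : i ≠ j) : Disjoint (Part m i) (Part m j) := by
  rw [Set.disjoint_left]
  rintro w ⟨⟨a1, b1⟩, ⟨ha1, hb1⟩, rfl⟩ ⟨⟨a2, b2⟩, ⟨ha2, hb2⟩, h2⟩
  simp only [F2] at h2
  obtain ⟨he, -⟩ := decomp_eq ha2.1 ha1.1 hb2.1 hb1.1 h2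
  apply hij
  have l1 : a1.length = 2 * i := by simpa using ha1.2
  have l2 : a2.length = 2 * j := by simpa using ha2.2
  have h3 : a2.length = a1.length := by simp only [] at he; rw [he]
  omega

def G2 : List Bool × List Bool → List Bool :=
  fun p => (true :: (p.1 ++ [false])) ++ (true :: (p.2 ++ [false]))

def Eset (m : ℕ) : Set (List Bool) := G2 '' (Dset (m - 1) ×ˢ Dset (m - 1))

lemma Eset_injOn (n : ℕ) : Set.InjOn G2 (Dset n ×ˢ Dset n) := by
  rintro ⟨a1, b1⟩ ⟨ha1, hb1⟩ ⟨a2, b2⟩ ⟨ha2, hb2⟩ h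
  simp only [G2] at h
  have hl : (true :: (a1 ++ [false])).length = (true :: (a2 ++ [false])).length := by
    simp only [Dset, Set.mem_setOf_eq] at ha1 ha2
    simp [ha1.2, ha2.2]
  obtain ⟨hx, hy⟩ := List.append_inj h hl
  obtain ⟨-, hx2⟩ := List.cons_eq_cons.mp hx
  obtain ⟨-, hy2⟩ := List.cons_eq_cons.mp hy
  have e1 : a1 = a2 := (List.append_inj hx2 (by rw [ha1.2, ha2.2])).1
  have e2 : b1 = b2 := (List.append_inj hy2 (by rw [hb1.2, hb2.2])).1
  simp only [Prod.mk.injEq]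
  exact ⟨e1, e2⟩

lemma Eset_ncard (k : ℕ) : (Eset (2 * k + 1)).ncard = catalan k * catalan k := by
  have h1 : 2 * k + 1 - 1 = 2 * k := by omega
  rw [Eset, h1, Set.ncard_image_of_injOn (Eset_injOn _), ncard_prod, Dset_ncard]

lemma Eset_finite (m : ℕ) : (Eset m).Finite :=
  (((Dset_finite _).prod (Dset_finite _)).image _)

end CBFSaux




/-- A word is bifix-free if no nonempty proper prefix of it is also a suffix of it. -/
def BifixFree {A : Type*} (w : List A) : Prop :=
  ∀ p : List A, p ≠ [] → p <+: w → p ≠ w → ¬ p <:+ w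

/-- Two (distinct, same-length) words are cross-bifix-free if no nonempty proper
prefix of either one is a suffix of the other. -/
def CrossBifixFree {A : Type*} (w w' : List A) : Prop :=
  (∀ p : List A, p ≠ [] → p <+: w → p ≠ w → ¬ p <:+ w') ∧
  (∀ p : List A, p ≠ [] → p <+: w' → p ≠ w' → ¬ p <:+ w)

/-- The set of bifix-free binary words of length `n`. -/
def BF (n : ℕ) : Set (List Bool) := {w | w.length = n ∧ BifixFree w}

/-- `CBFS₂(2m+1)` : words `1·α` where `α` is a Dyck word of length `2m`. -/
def CBFSodd (m : ℕ) : Set (List Bool) :=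
  {w | ∃ α : List Bool, DyckLen α (2 * m) ∧ w = true :: α}

/-- `CBFS₂(2m+2)` for even `m > 1` : words `α·1·β·0` with `α` a Dyck word of length `2i`,
`β` a Dyck word of length `2(m-i)`, `0 ≤ i ≤ m/2`. -/
def CBFSevenE (m : ℕ) : Set (List Bool) :=
  {w | ∃ (i : ℕ) (α β : List Bool), i ≤ m / 2 ∧ DyckLen α (2 * i) ∧
    DyckLen β (2 * (m - i)) ∧ w = α ++ true :: β ++ [false]}

/-- `CBFS₂(2m+2)` for odd `m ≥ 1` : words `α·1·β·0` with `α` a Dyck word of length `2i`,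
`β` a Dyck word of length `2(m-i)`, `0 ≤ i ≤ (m+1)/2`, excluding the words
`1·α'·0·1·β'·0` with `α'`, `β'` Dyck words of length `m-1`. -/
def CBFSevenO (m : ℕ) : Set (List Bool) :=
  {w | ∃ (i : ℕ) (α β : List Bool), i ≤ (m + 1) / 2 ∧ DyckLen α (2 * i) ∧
    DyckLen β (2 * (m - i)) ∧ w = α ++ true :: β ++ [false]} \
  {w | ∃ α' β' : List Bool, DyckLen α' (m - 1) ∧ DyckLen β' (m - 1) ∧
    w = true :: α' ++ false :: true :: β' ++ [false]}

/-- For every odd `m ≥ 1`,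
`|CBFS₂(2m+2)| = (∑_{i=0}^{(m+1)/2} C_i · C_{m-i}) - (C_{(m-1)/2})²`. -/
theorem CBFSevenO_card (m : ℕ) (hm : 1 ≤ m) (hmo : Odd m) :
    (CBFSevenO m).ncard =
      (∑ i ∈ Finset.range ((m + 1) / 2 + 1), catalan i * catalan (m - i)) -
        catalan ((m - 1) / 2) ^ 2 := by

  classical
  obtain ⟨k, hk⟩ := hmo
  subst hk
  have e2 : (2 * k + 1 - 1) / 2 = k := by omega
  have la2 : ∀ a : List Bool, DyckLen a (2 * k + 1 - 1) → a.length = 2 * k := by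
    intro a ha; have := ha.2; omega
  have hS : {w : List Bool | ∃ (i : ℕ) (α β : List Bool), i ≤ (2 * k + 1 + 1) / 2 ∧
      DyckLen α (2 * i) ∧ DyckLen β (2 * (2 * k + 1 - i)) ∧ w = α ++ true :: β ++ [false]} =
      ⋃ i ∈ (↑(Finset.range ((2 * k + 1 + 1) / 2 + 1)) : Set ℕ), CBFSaux.Part (2 * k + 1) i := by
    ext w
    simp only [Set.mem_setOf_eq, Set.mem_iUnion, Finset.mem_coe, Finset.mem_range,
      CBFSaux.Part, Set.mem_image, Set.mem_prod, Prod.exists, exists_prop]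
    constructor
    · rintro ⟨i, a, b, hi, ha, hb, rfl⟩
      exact ⟨i, by omega, a, b, ⟨ha, hb⟩, by simp [CBFSaux.F2]⟩
    · rintro ⟨i, hi, a, b, ⟨ha, hb⟩, rfl⟩
      exact ⟨i, a, b, by omega, ha, hb, by simp [CBFSaux.F2]⟩
  have hE : {w : List Bool | ∃ α' β' : List Bool, DyckLen α' (2 * k + 1 - 1) ∧
      DyckLen β' (2 * k + 1 - 1) ∧ w = true :: α' ++ false :: true :: β' ++ [false]} =
      CBFSaux.Eset (2 * k + 1) := by
    ext w
    simp only [Set.mem_setOf_eq, CBFSaux.Eset, Set.mem_image, Set.mem_prod, Prod.exists]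
    constructor
    · rintro ⟨a, b, ha, hb, rfl⟩
      exact ⟨a, b, ⟨ha, hb⟩, by simp [CBFSaux.G2]⟩
    · rintro ⟨a, b, ⟨ha, hb⟩, rfl⟩
      exact ⟨a, b, ha, hb, by simp [CBFSaux.G2]⟩
  have hEsub : CBFSaux.Eset (2 * k + 1) ⊆
      ⋃ i ∈ (↑(Finset.range ((2 * k + 1 + 1) / 2 + 1)) : Set ℕ), CBFSaux.Part (2 * k + 1) i := by
    rintro w ⟨⟨a, b⟩, ⟨ha, hb⟩, rfl⟩
    have ha' : DyckLen a (2 * k + 1 - 1) := ha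
    have hb' : DyckLen b (2 * k + 1 - 1) := hb
    apply Set.mem_biUnion (show (k + 1) ∈ (↑(Finset.range ((2 * k + 1 + 1) / 2 + 1)) : Set ℕ) by
      simp only [Finset.mem_coe, Finset.mem_range]; omega)
    refine ⟨(true :: (a ++ [false]), b), ⟨?_, ?_⟩, ?_⟩
    · refine ⟨CBFSaux.isDyck_nest ha'.1, ?_⟩
      have := la2 a ha'
      simp [this]; omega
    · refine ⟨hb'.1, ?_⟩
      have := la2 b hb'
      simp only [this]; omega
    · simp [CBFSaux.F2, CBFSaux.G2]
  unfold CBFSevenO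
  rw [hS, hE, Set.ncard_diff hEsub (CBFSaux.Eset_finite _),
    CBFSaux.ncard_biUnion _ _ (fun i _ => CBFSaux.Part_finite _ _)
      (fun i _ j _ hij => CBFSaux.Part_disjoint _ hij),
    CBFSaux.Eset_ncard, e2, pow_two]
  congr 1
  exact Finset.sum_congr rfl (fun i _ => CBFSaux.Part_ncard _ i)
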